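/- Let X ⊴ G be finite groups with X perfect, F an algebraically closed field of characteristic q ≥ 0, and let Ṽ be a projective representation of G whose restriction to X is an irreducible projective representation V whose cocycle has finite order in Z²(X,F^×). Assume H²(G,F^×) is finite. Then there exists a function β : G → F^× with β identically 1 on X such that the projective representation β·Ṽ extends V and has cocycle of finite order in Z²(G,F^×). -/

import Mathlib

/-- The subgroup of 2-cocycles of `G` with values in `Fˣ` (trivial action), inside the
group of all functions `G × G → Fˣ`. -/
def twoCocycles (G : Type*) [Group G] (F : Type*) [Field F] : Subgroup (G × G → Fˣ) where
  carrier := {α | ∀ g₁ g₂ g₃ : G,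
    α (g₁, g₂) * α (g₁ * g₂, g₃) = α (g₂, g₃) * α (g₁, g₂ * g₃)}
  one_mem' := by intro g₁ g₂ g₃; simp
  mul_mem' := by
    intro a b ha hb g₁ g₂ g₃
    simp only [Pi.mul_apply]
    rw [mul_mul_mul_comm, ha, hb, mul_mul_mul_comm]
  inv_mem' := by
    intro a ha g₁ g₂ g₃
    simp only [Pi.inv_apply]
    rw [← mul_inv, ha g₁ g₂ g₃, mul_inv]

/-- The coboundary homomorphism `∂ : (G → Fˣ) →* (G × G → Fˣ)`. -/
def twoCoboundary (G : Type*) [Group G] (F : Type*) [Field F] :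
    (G → Fˣ) →* (G × G → Fˣ) where
  toFun f := fun p => f p.1 * f p.2 * (f (p.1 * p.2))⁻¹
  map_one' := by funext p; simp
  map_mul' := by
    intro f g
    funext p
    simp only [Pi.mul_apply, mul_inv]
    rw [mul_mul_mul_comm (f p.1) (g p.1), mul_mul_mul_comm (f p.1 * f p.2) (g p.1 * g p.2)]

/-- The second cohomology group `H²(G, Fˣ)` (trivial action), as the quotient of the
cocycles by the coboundaries. -/
def H2 (G : Type*) [Group G] (F : Type*) [Field F] :=
  ↥(twoCocycles G F) ⧸ ((twoCoboundary G F).range.subgroupOf (twoCocycles G F))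

instance H2.commGroup (G : Type*) [Group G] (F : Type*) [Field F] : CommGroup (H2 G F) :=
  inferInstanceAs (CommGroup (_ ⧸ _))

/-- If `X ⊴ G`, `X` perfect, `Ṽ` a projective representation of `G` restricting
to an irreducible projective representation of `X` whose cocycle has finite order, and
`H²(G,Fˣ)` is finite, then there is `β : G → Fˣ`, identically `1` on `X`, such that `β • Ṽ`
extends the restriction and has cocycle of finite order in `Z²(G,Fˣ)`. -/
theorem extension_with_finite_order_cocycle {F : Type*} [Field F] [IsAlgClosed F]
    {G : Type*} [Group G] [Finite G]
    (X : Subgroup G) (hN : X.Normal) (hperf : commutator ↥X = ⊤)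
    {n : ℕ} (hn : 0 < n)
    (Vt : G → Matrix (Fin n) (Fin n) F) (α : G → G → Fˣ)
    (hVu : ∀ g, IsUnit (Vt g)) (hV1 : Vt 1 = 1)
    (hVcoc : ∀ g g', Vt g * Vt g' = (α g g' : F) • Vt (g * g'))
    (hirr : ∀ U : Submodule F (Fin n → F),
      (∀ x : ↥X, U.map (Vt ↑x).mulVecLin ≤ U) → U = ⊥ ∨ U = ⊤)
    (hfinX : ∃ N : ℕ, 0 < N ∧ ∀ x x' : ↥X, (α ↑x ↑x') ^ N = 1)
    (hH2 : Finite (H2 G F)) :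
    ∃ β : G → Fˣ, (∀ x : ↥X, β ↑x = 1) ∧
      (∀ x : ↥X, (β ↑x : F) • Vt ↑x = Vt ↑x) ∧
      ∃ N : ℕ, 0 < N ∧
        ∀ g g' : G, (β g * β g' * (β (g * g'))⁻¹ * α g g') ^ N = 1 := by
  classical
  obtain ⟨N0, hN0, hαX⟩ := hfinX
  -- the matrices Vt g are nonzero
  have hone : (1 : Matrix (Fin n) (Fin n) F) ≠ 0 := by
    intro h
    have := congrFun (congrFun h ⟨0, hn⟩) ⟨0, hn⟩
    simp [Matrix.one_apply] at this
  have hVne : ∀ g, Vt g ≠ 0 := by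
    intro g hg
    obtain ⟨u, hu⟩ := hVu g
    have h1 := u.mul_inv
    rw [hu, hg, zero_mul] at h1
    exact hone h1.symm
  -- scalar cancellation
  have hcancel : ∀ (c d : F) (g : G), c • Vt g = d • Vt g → c = d := by
    intro c d g h
    have h0 : (c - d) • Vt g = 0 := by rw [sub_smul, h, sub_self]
    rcases smul_eq_zero.mp h0 with h1 | h1
    · exact sub_eq_zero.mp h1
    · exact absurd h1 (hVne g)
  -- the cocycle identity for α
  have hα1 : ∀ g₁ g₂ g₃ : G, α g₁ g₂ * α (g₁ * g₂) g₃ = α g₂ g₃ * α g₁ (g₂ * g₃) := by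
    intro g₁ g₂ g₃
    have e1 : Vt g₁ * Vt g₂ * Vt g₃
        = ((α g₁ g₂ : F) * α (g₁ * g₂) g₃) • Vt (g₁ * g₂ * g₃) := by
      rw [hVcoc, smul_mul_assoc, hVcoc, smul_smul]
    have e2 : Vt g₁ * (Vt g₂ * Vt g₃)
        = ((α g₂ g₃ : F) * α g₁ (g₂ * g₃)) • Vt (g₁ * g₂ * g₃) := by
      rw [hVcoc g₂ g₃, mul_smul_comm, hVcoc, smul_smul, mul_assoc g₁]
    have := hcancel _ _ _ ((e1.symm.trans (by rw [mul_assoc])).trans e2)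
    exact Units.ext (by push_cast; exact this)
  set αc : G × G → Fˣ := fun p => α p.1 p.2 with hαc
  have hmem : αc ∈ twoCocycles G F := fun g₁ g₂ g₃ => hα1 g₁ g₂ g₃
  -- the class of α has finite order in H²
  haveI := hH2
  set a : H2 G F := QuotientGroup.mk ⟨αc, hmem⟩ with ha
  set M : ℕ := orderOf a with hM
  have hMpos : 0 < M := orderOf_pos a
  have haM : a ^ M = 1 := pow_orderOf_eq_one a
  have hmemM : (⟨αc, hmem⟩ : twoCocycles G F) ^ M
      ∈ (twoCoboundary G F).range.subgroupOf (twoCocycles G F) := by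
    rw [← QuotientGroup.eq_one_iff]
    exact haM
  rw [Subgroup.mem_subgroupOf] at hmemM
  obtain ⟨γ, hγ⟩ := hmemM
  have hγ' : ∀ g g' : G, γ g * γ g' * (γ (g * g'))⁻¹ = (α g g') ^ M := by
    intro g g'
    have := congrFun hγ (g, g')
    simpa [twoCoboundary, hαc] using this
  -- the function δ = γ^N0 and the exponent K
  set K : ℕ := M * N0 with hK
  have hKpos : 0 < K := Nat.mul_pos hMpos hN0
  set δ : G → Fˣ := fun g => γ g ^ N0 with hδdef
  have hδ : ∀ g g' : G, δ g * δ g' * (δ (g * g'))⁻¹ = (α g g') ^ K := by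
    intro g g'
    have := congrArg (· ^ N0) (hγ' g g')
    simp only [mul_pow, inv_pow, ← pow_mul] at this
    simpa [hδdef, hK] using this
  have hαXK : ∀ x x' : ↥X, (α ↑x ↑x') ^ K = 1 := by
    intro x x'
    rw [hK, Nat.mul_comm, pow_mul, hαX x x', one_pow]
  have hδX : ∀ x x' : ↥X, δ (↑x * ↑x') = δ ↑x * δ ↑x' := by
    intro x x'
    have h := hδ ↑x ↑x'
    rw [hαXK x x'] at h
    have := mul_inv_eq_one.mp h
    exact this.symm
  -- δ restricted to X is a homomorphism, hence trivial since X is perfect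
  have hδ1 : δ ((1 : ↥X) : G) = 1 := by
    have h11 := hδX 1 1
    simp only [OneMemClass.coe_one, mul_one] at h11
    have : δ (1 : G) * 1 = δ (1 : G) * δ (1 : G) := by rw [mul_one]; exact h11
    exact (mul_left_cancel this).symm
  have hδtriv : ∀ x : ↥X, δ ↑x = 1 := by
    set φ : ↥X →* Fˣ :=
      { toFun := fun x => δ ↑x
        map_one' := by simpa using hδ1
        map_mul' := fun x x' => by simpa using hδX x x' }
    intro x
    have hker : commutator ↥X ≤ φ.ker := Abelianization.commutator_subset_ker φ
    rw [hperf] at hker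
    have : x ∈ φ.ker := hker (Subgroup.mem_top x)
    simpa [φ] using this
  -- choose K-th roots of δ⁻¹
  have hroot : ∀ g : G, ∃ u : Fˣ, u ^ K = (δ g)⁻¹ := by
    intro g
    obtain ⟨r, hr⟩ := IsAlgClosed.exists_pow_nat_eq (((δ g)⁻¹ : Fˣ) : F) hKpos
    have hr0 : r ≠ 0 := by
      intro h
      rw [h, zero_pow hKpos.ne'] at hr
      exact Units.ne_zero _ hr.symm
    exact ⟨Units.mk0 r hr0, Units.ext (by push_cast [hr]; simp [hr])⟩
  set β : G → Fˣ := fun g => if g ∈ X then 1 else Classical.choose (hroot g) with hβ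
  have hβX : ∀ x : ↥X, β ↑x = 1 := by
    intro x
    simp [hβ, x.2]
  have hβK : ∀ g : G, (β g) ^ K = (δ g)⁻¹ := by
    intro g
    by_cases hg : g ∈ X
    · simp [hβ, hg, hδtriv ⟨g, hg⟩]
    · simp only [hβ, if_neg hg]
      exact Classical.choose_spec (hroot g)
  refine ⟨β, hβX, ?_, K, hKpos, ?_⟩
  · intro x
    rw [hβX x]
    simp
  · intro g g'
    have h1 : (β g * β g' * (β (g * g'))⁻¹ * α g g') ^ K
        = (δ g)⁻¹ * (δ g')⁻¹ * δ (g * g') * (α g g') ^ K := by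
      rw [mul_pow, mul_pow, mul_pow, inv_pow, hβK, hβK, hβK, inv_inv]
    rw [h1, ← hδ g g']
    have e : (δ g)⁻¹ * (δ g')⁻¹ * δ (g * g') = (δ g * δ g' * (δ (g * g'))⁻¹)⁻¹ := by
      rw [mul_inv, mul_inv, inv_inv]
    rw [e, inv_mul_cancel]
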